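/- Let n ≥ 3 and z : Fin n → Fin n → Bool. Then every vertex of the graph G(z) has even degree if and only if for every i ∈ Fin n the number of j with z i j = true is even. -/

import Mathlib

/-- The vertex `ℓ_i`, `0 ≤ i ≤ n+1`. -/
def vL {n : ℕ} (i : Fin (n + 2)) : Fin (n + 2) ⊕ Fin (n + 2) ⊕ Fin n := Sum.inl i

/-- The vertex `r_i`, `0 ≤ i ≤ n+1`. -/
def vR {n : ℕ} (i : Fin (n + 2)) : Fin (n + 2) ⊕ Fin (n + 2) ⊕ Fin n :=
  Sum.inr (Sum.inl i)

/-- The vertex `m_{j+1}`, i.e. `j : Fin n` represents the middle vertices `m_1, …, m_n`. -/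
def vM {n : ℕ} (j : Fin n) : Fin (n + 2) ⊕ Fin (n + 2) ⊕ Fin n :=
  Sum.inr (Sum.inr j)

/-- The graph `G(z)` on the `3n+4` vertices `ℓ_0, …, ℓ_{n+1}, r_0, …, r_{n+1}, m_1, …, m_n`.
Fixed edges: `{ℓ_i, ℓ_{i+1}}` and `{r_i, r_{i+1}}` for `0 ≤ i ≤ n`; `{m_j, m_{j+1}}` for
`1 ≤ j ≤ n-1`; and the five edges `{ℓ_0, m_1}`, `{r_0, m_1}`, `{ℓ_{n+1}, m_n}`,
`{r_{n+1}, m_n}`, `{m_1, m_n}`.  In addition, for every `(i, j)` with `z i j = true`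
(where `i, j : Fin n` represent indices `1, …, n`) the two edges `{ℓ_{i+1}, m_{j+1}}` and
`{r_{i+1}, m_{j+1}}`. -/
def GE (n : ℕ) (z : Fin n → Fin n → Bool) :
    SimpleGraph (Fin (n + 2) ⊕ Fin (n + 2) ⊕ Fin n) :=
  SimpleGraph.fromEdgeSet { e |
    (∃ i : Fin (n + 1), e = s(vL i.castSucc, vL i.succ)) ∨
    (∃ i : Fin (n + 1), e = s(vR i.castSucc, vR i.succ)) ∨
    (∃ j : Fin n, ∃ h : j.val + 1 < n, e = s(vM j, vM ⟨j.val + 1, h⟩)) ∨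
    (∃ h : 0 < n,
      e = s(vL 0, vM ⟨0, h⟩) ∨ e = s(vR 0, vM ⟨0, h⟩) ∨
      e = s(vL (Fin.last (n + 1)), vM ⟨n - 1, by omega⟩) ∨
      e = s(vR (Fin.last (n + 1)), vM ⟨n - 1, by omega⟩) ∨
      e = s(vM ⟨0, h⟩, vM ⟨n - 1, by omega⟩)) ∨
    (∃ i j : Fin n, z i j = true ∧
      (e = s(vL ⟨i.val + 1, by have := i.isLt; omega⟩, vM j) ∨
       e = s(vR ⟨i.val + 1, by have := i.isLt; omega⟩, vM j))) }


open SimpleGraph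

section Aux
variable {n : ℕ} (z : Fin n → Fin n → Bool)

/-- simp set shorthand used everywhere -/
lemma nsL0 (hn : 3 ≤ n) : (GE n z).neighborSet (vL (0 : Fin (n+2))) =
    {vL ⟨1, by omega⟩, vM ⟨0, by omega⟩} := by
  ext u
  simp only [mem_neighborSet, GE, vL, vR, vM, Sym2.eq_iff, SimpleGraph.fromEdgeSet_adj,
    Set.mem_setOf_eq, Set.mem_insert_iff, Set.mem_singleton_iff, Sum.inl.injEq, Sum.inr.injEq,
    reduceCtorEq, exists_false, false_or, or_false, false_and, and_false, exists_and_left,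
    Fin.ext_iff, Fin.val_zero, Fin.val_succ, Fin.coe_castSucc, Fin.val_last]
  constructor
  · rintro ⟨⟨i, h0, rfl⟩ | ⟨-, -, rfl⟩, -⟩
    · left; simp only [Sum.inl.injEq, Fin.ext_iff, Fin.val_succ]; omega
    · right; rfl
  · rintro (rfl | rfl)
    · exact ⟨Or.inl ⟨⟨0, by omega⟩, rfl, by simp [Fin.ext_iff]⟩, by simp [Fin.ext_iff]⟩
    · exact ⟨Or.inr ⟨trivial, by omega, rfl⟩, by simp⟩

lemma nsLlast (hn : 3 ≤ n) : (GE n z).neighborSet (vL (Fin.last (n+1))) =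
    {vL ⟨n, by omega⟩, vM ⟨n - 1, by omega⟩} := by
  ext u
  simp only [mem_neighborSet, GE, vL, vR, vM, Sym2.eq_iff, SimpleGraph.fromEdgeSet_adj,
    Set.mem_setOf_eq, Set.mem_insert_iff, Set.mem_singleton_iff, Sum.inl.injEq, Sum.inr.injEq,
    reduceCtorEq, exists_false, false_or, or_false, false_and, and_false, exists_and_left,
    Fin.ext_iff, Fin.val_zero, Fin.val_succ, Fin.coe_castSucc, Fin.val_last]
  constructor
  · rintro ⟨⟨i, ⟨he, rfl⟩ | ⟨he, rfl⟩⟩ | ⟨-, -, rfl⟩ | ⟨i, j, hz, he, rfl⟩, -⟩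
    · exact absurd he (by have := i.isLt; omega)
    · left; simp [Fin.ext_iff]; omega
    · right; rfl
    · exact absurd he (by have := i.isLt; omega)
  · rintro (rfl | rfl)
    · exact ⟨Or.inl ⟨⟨n, by omega⟩, Or.inr ⟨by simp, by simp [Fin.ext_iff]⟩⟩,
        by simp [Fin.ext_iff, Fin.last]⟩
    · exact ⟨Or.inr (Or.inl ⟨trivial, by omega, rfl⟩), by simp⟩

lemma nsLmid (hn : 3 ≤ n) (i : Fin n) : (GE n z).neighborSet (vL ⟨i.val + 1, by omega⟩) =
    {vL ⟨i.val, by omega⟩, vL ⟨i.val + 2, by omega⟩} ∪ vM '' {j | z i j = true} := by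
  ext u
  simp only [mem_neighborSet, GE, vL, vR, vM, Sym2.eq_iff, SimpleGraph.fromEdgeSet_adj,
    Set.mem_setOf_eq, Set.mem_insert_iff, Set.mem_singleton_iff, Sum.inl.injEq, Sum.inr.injEq,
    reduceCtorEq, exists_false, false_or, or_false, false_and, and_false, exists_and_left,
    Fin.ext_iff, Fin.val_zero, Fin.val_succ, Fin.coe_castSucc, Fin.val_last,
    Set.mem_union, Set.mem_image]
  constructor
  · rintro ⟨⟨i', ⟨h1, rfl⟩ | ⟨h1, rfl⟩⟩ | ⟨h1, -⟩ | ⟨i', j, hz, h1, rfl⟩, -⟩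
    · left; right; simp [Fin.ext_iff]; omega
    · left; left; simp [Fin.ext_iff]; omega
    · exact absurd h1 (by have := i.isLt; omega)
    · right; exact ⟨j, by obtain rfl : i' = i := Fin.ext (by omega); exact hz, rfl⟩
  · have hlt := i.isLt
    rintro ((rfl | rfl) | ⟨j, hz, rfl⟩)
    · exact ⟨Or.inl ⟨⟨i.val, by omega⟩, Or.inr ⟨rfl, by simp [Fin.ext_iff]⟩⟩, by simp [Fin.ext_iff]⟩
    · exact ⟨Or.inl ⟨⟨i.val + 1, by omega⟩, Or.inl ⟨rfl, by simp [Fin.ext_iff]⟩⟩, by simp [Fin.ext_iff]⟩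
    · exact ⟨Or.inr (Or.inr ⟨i, j, hz, rfl, rfl⟩), by simp⟩

lemma nsR0 (hn : 3 ≤ n) : (GE n z).neighborSet (vR (0 : Fin (n+2))) =
    {vR ⟨1, by omega⟩, vM ⟨0, by omega⟩} := by
  ext u
  simp only [mem_neighborSet, GE, vL, vR, vM, Sym2.eq_iff, SimpleGraph.fromEdgeSet_adj,
    Set.mem_setOf_eq, Set.mem_insert_iff, Set.mem_singleton_iff, Sum.inl.injEq, Sum.inr.injEq,
    reduceCtorEq, exists_false, false_or, or_false, false_and, and_false, exists_and_left,
    Fin.ext_iff, Fin.val_zero, Fin.val_succ, Fin.coe_castSucc, Fin.val_last]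
  constructor
  · rintro ⟨⟨i, h0, rfl⟩ | ⟨-, -, rfl⟩, -⟩
    · left; simp only [Sum.inr.injEq, Sum.inl.injEq, Fin.ext_iff, Fin.val_succ]; omega
    · right; rfl
  · rintro (rfl | rfl)
    · exact ⟨Or.inl ⟨⟨0, by omega⟩, rfl, by simp [Fin.ext_iff]⟩, by simp [Fin.ext_iff]⟩
    · exact ⟨Or.inr ⟨trivial, by omega, rfl⟩, by simp⟩

lemma nsRlast (hn : 3 ≤ n) : (GE n z).neighborSet (vR (Fin.last (n+1))) =
    {vR ⟨n, by omega⟩, vM ⟨n - 1, by omega⟩} := by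
  ext u
  simp only [mem_neighborSet, GE, vL, vR, vM, Sym2.eq_iff, SimpleGraph.fromEdgeSet_adj,
    Set.mem_setOf_eq, Set.mem_insert_iff, Set.mem_singleton_iff, Sum.inl.injEq, Sum.inr.injEq,
    reduceCtorEq, exists_false, false_or, or_false, false_and, and_false, exists_and_left,
    Fin.ext_iff, Fin.val_zero, Fin.val_succ, Fin.coe_castSucc, Fin.val_last]
  constructor
  · rintro ⟨⟨i, ⟨he, rfl⟩ | ⟨he, rfl⟩⟩ | ⟨-, -, rfl⟩ | ⟨i, j, hz, he, rfl⟩, -⟩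
    · exact absurd he (by have := i.isLt; omega)
    · left; simp [Fin.ext_iff]; omega
    · right; rfl
    · exact absurd he (by have := i.isLt; omega)
  · rintro (rfl | rfl)
    · exact ⟨Or.inl ⟨⟨n, by omega⟩, Or.inr ⟨by simp, by simp [Fin.ext_iff]⟩⟩,
        by simp [Fin.ext_iff, Fin.last]⟩
    · exact ⟨Or.inr (Or.inl ⟨trivial, by omega, rfl⟩), by simp⟩

lemma nsRmid (hn : 3 ≤ n) (i : Fin n) : (GE n z).neighborSet (vR ⟨i.val + 1, by omega⟩) =
    {vR ⟨i.val, by omega⟩, vR ⟨i.val + 2, by omega⟩} ∪ vM '' {j | z i j = true} := by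
  ext u
  simp only [mem_neighborSet, GE, vL, vR, vM, Sym2.eq_iff, SimpleGraph.fromEdgeSet_adj,
    Set.mem_setOf_eq, Set.mem_insert_iff, Set.mem_singleton_iff, Sum.inl.injEq, Sum.inr.injEq,
    reduceCtorEq, exists_false, false_or, or_false, false_and, and_false, exists_and_left,
    Fin.ext_iff, Fin.val_zero, Fin.val_succ, Fin.coe_castSucc, Fin.val_last,
    Set.mem_union, Set.mem_image]
  constructor
  · rintro ⟨⟨i', ⟨h1, rfl⟩ | ⟨h1, rfl⟩⟩ | ⟨h1, -⟩ | ⟨i', j, hz, h1, rfl⟩, -⟩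
    · left; right; simp [Fin.ext_iff]; omega
    · left; left; simp [Fin.ext_iff]; omega
    · exact absurd h1 (by have := i.isLt; omega)
    · right; exact ⟨j, by obtain rfl : i' = i := Fin.ext (by omega); exact hz, rfl⟩
  · have hlt := i.isLt
    rintro ((rfl | rfl) | ⟨j, hz, rfl⟩)
    · exact ⟨Or.inl ⟨⟨i.val, by omega⟩, Or.inr ⟨rfl, by simp [Fin.ext_iff]⟩⟩, by simp [Fin.ext_iff]⟩
    · exact ⟨Or.inl ⟨⟨i.val + 1, by omega⟩, Or.inl ⟨rfl, by simp [Fin.ext_iff]⟩⟩, by simp [Fin.ext_iff]⟩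
    · exact ⟨Or.inr (Or.inr ⟨i, j, hz, rfl, rfl⟩), by simp⟩


lemma nsM0 (hn : 3 ≤ n) : (GE n z).neighborSet (vM ⟨0, by omega⟩) =
    {vL 0, vR 0, vM ⟨1, by omega⟩, vM ⟨n - 1, by omega⟩} ∪
      (fun i : Fin n => vL ⟨i.val + 1, by omega⟩) '' {i | z i ⟨0, by omega⟩ = true} ∪
      (fun i : Fin n => vR ⟨i.val + 1, by omega⟩) '' {i | z i ⟨0, by omega⟩ = true} := by
  ext u
  simp only [mem_neighborSet, GE, vL, vR, vM, Sym2.eq_iff, SimpleGraph.fromEdgeSet_adj,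
    Set.mem_setOf_eq, Set.mem_insert_iff, Set.mem_singleton_iff, Sum.inl.injEq, Sum.inr.injEq,
    reduceCtorEq, exists_false, false_or, or_false, false_and, and_false, exists_and_left,
    Fin.ext_iff, Fin.val_zero, Fin.val_succ, Fin.coe_castSucc, Fin.val_last,
    Set.mem_union, Set.mem_image]
  constructor
  · rintro ⟨⟨j', hj, hlt, rfl⟩ | ⟨hpos, H⟩ | ⟨i, j', hz, ⟨hj, rfl⟩ | ⟨hj, rfl⟩⟩, -⟩
    · left; left; right; right; left; simp [Fin.ext_iff]; omega
    · rcases H with ⟨-, rfl⟩ | ⟨-, rfl⟩ | ⟨h, -⟩ | ⟨h, -⟩ | ⟨-, rfl⟩ | ⟨h, -⟩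
      · left; left; left; rfl
      · left; left; right; left; rfl
      · omega
      · omega
      · left; left; right; right; right; rfl
      · omega
    · left; right; exact ⟨i, by have h' : (⟨0, by omega⟩ : Fin n) = j' := Fin.ext hj; rw [h']; exact hz, rfl⟩
    · right; exact ⟨i, by have h' : (⟨0, by omega⟩ : Fin n) = j' := Fin.ext hj; rw [h']; exact hz, rfl⟩
  · rintro (((rfl | rfl | rfl | rfl) | ⟨i, hz, rfl⟩) | ⟨i, hz, rfl⟩)
    · exact ⟨Or.inr (Or.inl ⟨by omega, Or.inl ⟨trivial, rfl⟩⟩), by simp⟩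
    · exact ⟨Or.inr (Or.inl ⟨by omega, Or.inr (Or.inl ⟨trivial, rfl⟩)⟩), by simp⟩
    · exact ⟨Or.inl ⟨⟨0, by omega⟩, rfl, show 0 + 1 < n by omega, by simp [Fin.ext_iff]⟩, by simp [Fin.ext_iff]⟩
    · exact ⟨Or.inr (Or.inl ⟨by omega, Or.inr (Or.inr (Or.inr (Or.inr (Or.inl ⟨trivial, rfl⟩))))⟩),
        by simp [Fin.mk.injEq, Fin.ext_iff]; omega⟩
    · exact ⟨Or.inr (Or.inr ⟨i, ⟨0, by omega⟩, hz, Or.inl ⟨rfl, rfl⟩⟩), by simp⟩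
    · exact ⟨Or.inr (Or.inr ⟨i, ⟨0, by omega⟩, hz, Or.inr ⟨rfl, rfl⟩⟩), by simp⟩

lemma nsMlast (hn : 3 ≤ n) : (GE n z).neighborSet (vM ⟨n - 1, by omega⟩) =
    {vL (Fin.last (n+1)), vR (Fin.last (n+1)), vM ⟨n - 2, by omega⟩, vM ⟨0, by omega⟩} ∪
      (fun i : Fin n => vL ⟨i.val + 1, by omega⟩) '' {i | z i ⟨n - 1, by omega⟩ = true} ∪
      (fun i : Fin n => vR ⟨i.val + 1, by omega⟩) '' {i | z i ⟨n - 1, by omega⟩ = true} := by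
  ext u
  simp only [mem_neighborSet, GE, vL, vR, vM, Sym2.eq_iff, SimpleGraph.fromEdgeSet_adj,
    Set.mem_setOf_eq, Set.mem_insert_iff, Set.mem_singleton_iff, Sum.inl.injEq, Sum.inr.injEq,
    reduceCtorEq, exists_false, false_or, or_false, false_and, and_false, exists_and_left,
    Fin.ext_iff, Fin.val_zero, Fin.val_succ, Fin.coe_castSucc, Fin.val_last,
    Set.mem_union, Set.mem_image]
  constructor
  · rintro ⟨⟨j', hlt, ⟨hj, rfl⟩ | ⟨hj, rfl⟩⟩ | ⟨hpos, H⟩ | ⟨i, j', hz, ⟨hj, rfl⟩ | ⟨hj, rfl⟩⟩, -⟩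
    · omega
    · left; left; right; right; left; simp [Fin.ext_iff]; omega
    · rcases H with ⟨h, -⟩ | ⟨h, -⟩ | ⟨-, rfl⟩ | ⟨-, rfl⟩ | ⟨h, -⟩ | ⟨-, rfl⟩
      · omega
      · omega
      · left; left; left; rfl
      · left; left; right; left; rfl
      · omega
      · left; left; right; right; right; rfl
    · left; right
      exact ⟨i, by have h' : (⟨n - 1, by omega⟩ : Fin n) = j' := Fin.ext hj; rw [h']; exact hz, rfl⟩
    · right; exact ⟨i, by have h' : (⟨n - 1, by omega⟩ : Fin n) = j' := Fin.ext hj; rw [h']; exact hz, rfl⟩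
  · rintro (((rfl | rfl | rfl | rfl) | ⟨i, hz, rfl⟩) | ⟨i, hz, rfl⟩)
    · exact ⟨Or.inr (Or.inl ⟨by omega, Or.inr (Or.inr (Or.inl ⟨trivial, rfl⟩))⟩), by simp⟩
    · exact ⟨Or.inr (Or.inl ⟨by omega, Or.inr (Or.inr (Or.inr (Or.inl ⟨trivial, rfl⟩)))⟩), by simp⟩
    · exact ⟨Or.inl ⟨⟨n - 2, by omega⟩, show n - 2 + 1 < n by omega, Or.inr ⟨show n - 1 = n - 2 + 1 by omega, by simp [Fin.ext_iff]⟩⟩,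
        by simp [Fin.mk.injEq, Fin.ext_iff]; omega⟩
    · exact ⟨Or.inr (Or.inl ⟨by omega,
        Or.inr (Or.inr (Or.inr (Or.inr (Or.inr ⟨trivial, rfl⟩))))⟩), by simp [Fin.mk.injEq, Fin.ext_iff]; omega⟩
    · exact ⟨Or.inr (Or.inr ⟨i, ⟨n - 1, by omega⟩, hz, Or.inl ⟨rfl, rfl⟩⟩), by simp⟩
    · exact ⟨Or.inr (Or.inr ⟨i, ⟨n - 1, by omega⟩, hz, Or.inr ⟨rfl, rfl⟩⟩), by simp⟩

lemma nsMmid (hn : 3 ≤ n) (j : Fin n) (h0 : 0 < j.val) (h1 : j.val < n - 1) :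
    (GE n z).neighborSet (vM j) =
    {vM ⟨j.val - 1, by omega⟩, vM ⟨j.val + 1, by omega⟩} ∪
      (fun i : Fin n => vL ⟨i.val + 1, by omega⟩) '' {i | z i j = true} ∪
      (fun i : Fin n => vR ⟨i.val + 1, by omega⟩) '' {i | z i j = true} := by
  ext u
  simp only [mem_neighborSet, GE, vL, vR, vM, Sym2.eq_iff, SimpleGraph.fromEdgeSet_adj,
    Set.mem_setOf_eq, Set.mem_insert_iff, Set.mem_singleton_iff, Sum.inl.injEq, Sum.inr.injEq,
    reduceCtorEq, exists_false, false_or, or_false, false_and, and_false, exists_and_left,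
    Fin.ext_iff, Fin.val_zero, Fin.val_succ, Fin.coe_castSucc, Fin.val_last,
    Set.mem_union, Set.mem_image]
  constructor
  · rintro ⟨⟨j', hlt, ⟨hj, rfl⟩ | ⟨hj, rfl⟩⟩ | ⟨hpos, H⟩ | ⟨i, j', hz, ⟨hj, rfl⟩ | ⟨hj, rfl⟩⟩, -⟩
    · left; left; right; simp [Fin.ext_iff]; omega
    · left; left; left; simp [Fin.ext_iff]; omega
    · rcases H with ⟨h, -⟩ | ⟨h, -⟩ | ⟨h, -⟩ | ⟨h, -⟩ | ⟨h, -⟩ | ⟨h, -⟩ <;> omega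
    · left; right; exact ⟨i, by have h' : j = j' := Fin.ext hj; rw [h']; exact hz, rfl⟩
    · right; exact ⟨i, by have h' : j = j' := Fin.ext hj; rw [h']; exact hz, rfl⟩
  · rintro (((rfl | rfl) | ⟨i, hz, rfl⟩) | ⟨i, hz, rfl⟩)
    · exact ⟨Or.inl ⟨⟨j.val - 1, by omega⟩, show j.val - 1 + 1 < n by omega, Or.inr ⟨show j.val = j.val - 1 + 1 by omega, by simp [Fin.ext_iff]⟩⟩,
        by simp [Fin.mk.injEq, Fin.ext_iff]; omega⟩
    · exact ⟨Or.inl ⟨⟨j.val, by omega⟩, show j.val + 1 < n by omega, Or.inl ⟨rfl, by simp [Fin.ext_iff]⟩⟩,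
        by simp [Fin.ext_iff]⟩
    · exact ⟨Or.inr (Or.inr ⟨i, j, hz, Or.inl ⟨rfl, rfl⟩⟩), by simp⟩
    · exact ⟨Or.inr (Or.inr ⟨i, j, hz, Or.inr ⟨rfl, rfl⟩⟩), by simp⟩



lemma injvM : Function.Injective (vM (n := n)) := by
  intro a b h; simpa [vM] using h

lemma injfL : Function.Injective
    (fun i : Fin n => (vL ⟨i.val + 1, by omega⟩ : Fin (n + 2) ⊕ Fin (n + 2) ⊕ Fin n)) := by
  intro a b h; simp only [vL, Sum.inl.injEq, Fin.mk.injEq] at h; exact Fin.ext (by omega)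

lemma injfR : Function.Injective
    (fun i : Fin n => (vR ⟨i.val + 1, by omega⟩ : Fin (n + 2) ⊕ Fin (n + 2) ⊕ Fin n)) := by
  intro a b h; simp only [vR, Sum.inr.injEq, Sum.inl.injEq, Fin.mk.injEq] at h
  exact Fin.ext (by omega)

lemma ncardS (i : Fin n) :
    {j | z i j = true}.ncard = (Finset.univ.filter fun j => z i j = true).card := by
  rw [show {j | z i j = true} = ↑(Finset.univ.filter fun j => z i j = true) by ext; simp]
  exact Set.ncard_coe_finset _

lemma ncardLmid (hn : 3 ≤ n) (i : Fin n) :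
    ((GE n z).neighborSet (vL ⟨i.val + 1, by omega⟩)).ncard =
      2 + (Finset.univ.filter fun j => z i j = true).card := by
  rw [nsLmid z hn i, Set.ncard_union_eq (by
      rw [Set.disjoint_left]; rintro x (rfl | rfl) ⟨j, -, h⟩ <;> simp [vL, vM] at h)
    (Set.toFinite _) (Set.toFinite _),
    Set.ncard_pair (by simp [vL, Fin.ext_iff]),
    Set.ncard_image_of_injective _ injvM, ncardS]

lemma ncardRmid (hn : 3 ≤ n) (i : Fin n) :
    ((GE n z).neighborSet (vR ⟨i.val + 1, by omega⟩)).ncard =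
      2 + (Finset.univ.filter fun j => z i j = true).card := by
  rw [nsRmid z hn i, Set.ncard_union_eq (by
      rw [Set.disjoint_left]; rintro x (rfl | rfl) ⟨j, -, h⟩ <;> simp [vR, vM] at h)
    (Set.toFinite _) (Set.toFinite _),
    Set.ncard_pair (by simp [vR, Fin.ext_iff]),
    Set.ncard_image_of_injective _ injvM, ncardS]

lemma even_ncard_M (A : Set (Fin (n + 2) ⊕ Fin (n + 2) ⊕ Fin n)) (S : Set (Fin n))
    (hA : Even A.ncard)
    (h1 : Disjoint A ((fun i : Fin n =>
      (vL ⟨i.val + 1, by omega⟩ : Fin (n + 2) ⊕ Fin (n + 2) ⊕ Fin n)) '' S))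
    (h2 : Disjoint A ((fun i : Fin n =>
      (vR ⟨i.val + 1, by omega⟩ : Fin (n + 2) ⊕ Fin (n + 2) ⊕ Fin n)) '' S)) :
    Even ((A ∪ (fun i : Fin n =>
        (vL ⟨i.val + 1, by omega⟩ : Fin (n + 2) ⊕ Fin (n + 2) ⊕ Fin n)) '' S ∪
      (fun i : Fin n =>
        (vR ⟨i.val + 1, by omega⟩ : Fin (n + 2) ⊕ Fin (n + 2) ⊕ Fin n)) '' S).ncard) := by
  have hLR : Disjoint ((fun i : Fin n =>
      (vL ⟨i.val + 1, by omega⟩ : Fin (n + 2) ⊕ Fin (n + 2) ⊕ Fin n)) '' S)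
      ((fun i : Fin n =>
      (vR ⟨i.val + 1, by omega⟩ : Fin (n + 2) ⊕ Fin (n + 2) ⊕ Fin n)) '' S) := by
    rw [Set.disjoint_left]; rintro x ⟨a, -, rfl⟩ ⟨b, -, h⟩; simp [vL, vR] at h
  rw [Set.ncard_union_eq (Set.disjoint_union_left.2 ⟨h2, hLR⟩) (Set.toFinite _) (Set.toFinite _),
    Set.ncard_union_eq h1 (Set.toFinite _) (Set.toFinite _),
    Set.ncard_image_of_injective _ injfL, Set.ncard_image_of_injective _ injfR]
  obtain ⟨a, ha⟩ := hA
  exact ⟨a + S.ncard, by omega⟩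

lemma deg_ncard (v : Fin (n + 2) ⊕ Fin (n + 2) ⊕ Fin n) :
    (haveI : Fintype ((GE n z).neighborSet v) := Fintype.ofFinite _;
      (GE n z).degree v) = ((GE n z).neighborSet v).ncard := by
  exact (@Set.ncard_eq_toFinset_card' _ ((GE n z).neighborSet v) (Fintype.ofFinite _)).symm

end Aux

theorem GE_even_degree_iff (n : ℕ) (hn : 3 ≤ n) (z : Fin n → Fin n → Bool) :
    (∀ v : Fin (n + 2) ⊕ Fin (n + 2) ⊕ Fin n,
        haveI : Fintype ((GE n z).neighborSet v) := Fintype.ofFinite _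
        Even ((GE n z).degree v)) ↔
      ∀ i : Fin n, Even (Finset.univ.filter fun j => z i j = true).card := by
  constructor
  · intro h i
    have hv := h (vL ⟨i.val + 1, by omega⟩)
    rw [deg_ncard, ncardLmid z hn i] at hv
    obtain ⟨k, hk⟩ := hv
    exact ⟨k - 1, by omega⟩
  · intro h v
    rw [deg_ncard]
    obtain (k | k | j) := v
    · show Even (((GE n z).neighborSet (vL k)).ncard)
      by_cases h0 : k.val = 0
      · rw [show vL k = vL (0 : Fin (n + 2)) from congrArg vL (Fin.ext (by simp [h0])),
          nsL0 z hn, Set.ncard_pair (by simp [vL, vM])]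
        exact ⟨1, rfl⟩
      · by_cases h1 : k.val = n + 1
        · rw [show vL k = vL (Fin.last (n + 1)) from congrArg vL (Fin.ext (by simp [h1])),
            nsLlast z hn, Set.ncard_pair (by simp [vL, vM])]
          exact ⟨1, rfl⟩
        · have hk := k.isLt
          set i₀ : Fin n := ⟨k.val - 1, by omega⟩ with hi₀
          rw [show vL k = vL ⟨i₀.val + 1, by omega⟩ from congrArg vL (Fin.ext (by simp [hi₀]; omega)),
            ncardLmid z hn i₀]
          obtain ⟨t, ht⟩ := h i₀
          exact ⟨t + 1, by omega⟩
    · show Even (((GE n z).neighborSet (vR k)).ncard)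
      by_cases h0 : k.val = 0
      · rw [show vR k = vR (0 : Fin (n + 2)) from congrArg vR (Fin.ext (by simp [h0])),
          nsR0 z hn, Set.ncard_pair (by simp [vR, vM])]
        exact ⟨1, rfl⟩
      · by_cases h1 : k.val = n + 1
        · rw [show vR k = vR (Fin.last (n + 1)) from congrArg vR (Fin.ext (by simp [h1])),
            nsRlast z hn, Set.ncard_pair (by simp [vR, vM])]
          exact ⟨1, rfl⟩
        · have hk := k.isLt
          set i₀ : Fin n := ⟨k.val - 1, by omega⟩ with hi₀
          rw [show vR k = vR ⟨i₀.val + 1, by omega⟩ from congrArg vR (Fin.ext (by simp [hi₀]; omega)),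
            ncardRmid z hn i₀]
          obtain ⟨t, ht⟩ := h i₀
          exact ⟨t + 1, by omega⟩
    · show Even (((GE n z).neighborSet (vM j)).ncard)
      by_cases h0 : j.val = 0
      · rw [show vM j = vM ⟨0, by omega⟩ from congrArg vM (Fin.ext h0), nsM0 z hn]
        refine even_ncard_M _ _ ?_ ?_ ?_
        · rw [Set.ncard_insert_of_notMem (by simp [vL, vR, vM]),
            Set.ncard_insert_of_notMem (by simp [vR, vM]),
            Set.ncard_pair (by simp [vM, Fin.ext_iff]; omega)]
          exact ⟨2, rfl⟩
        · rw [Set.disjoint_left]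
          rintro x (rfl | rfl | rfl | rfl) ⟨i, -, hx⟩ <;>
            (have hi := i.isLt; revert hx; simp [vL, vR, vM, Fin.ext_iff, Fin.last]) <;> omega
        · rw [Set.disjoint_left]
          rintro x (rfl | rfl | rfl | rfl) ⟨i, -, hx⟩ <;>
            (have hi := i.isLt; revert hx; simp [vL, vR, vM, Fin.ext_iff, Fin.last]) <;> omega
      · by_cases h1 : j.val = n - 1
        · rw [show vM j = vM ⟨n - 1, by omega⟩ from congrArg vM (Fin.ext h1), nsMlast z hn]
          refine even_ncard_M _ _ ?_ ?_ ?_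
          · rw [Set.ncard_insert_of_notMem (by simp [vL, vR, vM]),
              Set.ncard_insert_of_notMem (by simp [vR, vM]),
              Set.ncard_pair (by simp [vM, Fin.ext_iff]; omega)]
            exact ⟨2, rfl⟩
          · rw [Set.disjoint_left]
            rintro x (rfl | rfl | rfl | rfl) ⟨i, -, hx⟩ <;>
              (have hi := i.isLt; revert hx; simp [vL, vR, vM, Fin.ext_iff, Fin.last]) <;> omega
          · rw [Set.disjoint_left]
            rintro x (rfl | rfl | rfl | rfl) ⟨i, -, hx⟩ <;>
              (have hi := i.isLt; revert hx; simp [vL, vR, vM, Fin.ext_iff, Fin.last]) <;> omega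
        · have hj := j.isLt
          rw [nsMmid z hn j (by omega) (by omega)]
          refine even_ncard_M _ _ ?_ ?_ ?_
          · rw [Set.ncard_pair (by simp [vM, Fin.ext_iff])]
            exact ⟨1, rfl⟩
          · rw [Set.disjoint_left]
            rintro x (rfl | rfl) ⟨i, -, hx⟩ <;> simp [vL, vM] at hx
          · rw [Set.disjoint_left]
            rintro x (rfl | rfl) ⟨i, -, hx⟩ <;> simp [vR, vM] at hx
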